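/- For all integers a, b ≥ 1 and n ≥ 1, the single-card transition matrices satisfy P_a · P_b = P_{ab}, i.e. for all 1 ≤ i, j ≤ n: Σ_{t=1}^{n} P_a(i,t)·P_b(t,j) = P_{ab}(i,j). -/

import Mathlib

/-- Bayer–Diaconis encoding: for a shuffle word `f : Fin n → Fin a`, the card at final
position `i` originally occupied 1-based position `pos f i`. -/
def pos {n a : ℕ} (f : Fin n → Fin a) (i : Fin n) : ℕ :=
  (Finset.univ.filter fun j => f j < f i).card +
    (Finset.univ.filter fun j => j ≤ i ∧ f j = f i).card

/-- `P_a(i,j)`: the probability that an `a`-shuffle moves the card at (1-based) position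
`(i:ℕ)+1` to position `(j:ℕ)+1`. -/
noncomputable def Pmat (a : ℕ) {n : ℕ} (i j : Fin n) : ℝ :=
  ((Finset.univ.filter fun f : Fin n → Fin a => pos f j = (i : ℕ) + 1).card : ℝ) / (a : ℝ) ^ n

open Finset

variable {n b : ℕ} {g : Fin n → Fin b}

lemma aux_pos_pos (g : Fin n → Fin b) (k : Fin n) : 1 ≤ pos g k := by
  have hk : k ∈ Finset.univ.filter fun j => j ≤ k ∧ g j = g k := by simp
  have := Finset.card_pos.mpr ⟨k, hk⟩
  unfold pos; omega

lemma aux_pos_le (g : Fin n → Fin b) (k : Fin n) : pos g k ≤ n := by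
  unfold pos
  have hdis : Disjoint (Finset.univ.filter fun j => g j < g k)
      (Finset.univ.filter fun j => j ≤ k ∧ g j = g k) := by
    rw [Finset.disjoint_left]
    intro x hx hx'
    simp only [Finset.mem_filter] at hx hx'
    exact absurd (hx'.2.2 ▸ hx.2) (lt_irrefl _)
  rw [← Finset.card_union_of_disjoint hdis]
  calc _ ≤ (Finset.univ : Finset (Fin n)).card := Finset.card_le_card (Finset.subset_univ _)
    _ = n := Finset.card_fin n

lemma aux_pos_lt_of_lt {j k : Fin n} (h : g j < g k) : pos g j < pos g k := by
  have h1 : (Finset.univ.filter fun t => g t ≤ g j).card ≤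
      (Finset.univ.filter fun t => g t < g k).card := by
    apply Finset.card_le_card
    intro x hx
    simp only [Finset.mem_filter, Finset.mem_univ, true_and] at *
    exact lt_of_le_of_lt hx h
  have h2 : (Finset.univ.filter fun t => g t < g j).card
      + (Finset.univ.filter fun t => g t = g j).card
      = (Finset.univ.filter fun t => g t ≤ g j).card := by
    rw [← Finset.card_union_of_disjoint]
    · congr 1
      ext x
      simp only [Finset.mem_union, Finset.mem_filter, Finset.mem_univ, true_and]
      exact le_iff_lt_or_eq.symm
    · rw [Finset.disjoint_left]
      intro x hx hx'
      simp only [Finset.mem_filter] at hx hx'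
      exact absurd (hx'.2 ▸ hx.2) (lt_irrefl _)
  have h3 : (Finset.univ.filter fun t => t ≤ j ∧ g t = g j).card ≤
      (Finset.univ.filter fun t => g t = g j).card := by
    apply Finset.card_le_card
    intro x hx
    simp only [Finset.mem_filter] at *
    exact ⟨hx.1, hx.2.2⟩
  have h4 : 1 ≤ (Finset.univ.filter fun t => t ≤ k ∧ g t = g k).card :=
    Finset.card_pos.mpr ⟨k, by simp⟩
  unfold pos; omega

lemma aux_pos_le_iff_of_eq {j k : Fin n} (h : g j = g k) : pos g j ≤ pos g k ↔ j ≤ k := by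
  have h1 : (Finset.univ.filter fun t => g t < g j) = (Finset.univ.filter fun t => g t < g k) := by
    rw [h]
  have h2 : ∀ t : Fin n, (g t = g j) ↔ (g t = g k) := fun t => by rw [h]
  unfold pos
  rw [h1, Nat.add_le_add_iff_left]
  constructor
  · intro hle
    by_contra hjk
    push_neg at hjk
    have hsub : (Finset.univ.filter fun t => t ≤ k ∧ g t = g k) ⊂
        (Finset.univ.filter fun t => t ≤ j ∧ g t = g j) := by
      constructor
      · intro x hx
        simp only [Finset.mem_filter] at *
        exact ⟨hx.1, le_of_lt (lt_of_le_of_lt hx.2.1 hjk), (h2 x).mpr hx.2.2⟩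
      · intro hsub'
        have : j ∈ (Finset.univ.filter fun t => t ≤ k ∧ g t = g k) :=
          hsub' (by simp [h])
        simp only [Finset.mem_filter] at this
        exact absurd this.2.1 (not_le.mpr hjk)
    have := Finset.card_lt_card hsub
    omega
  · intro hjk
    have hsub : (Finset.univ.filter fun t => t ≤ j ∧ g t = g j) ⊆
        (Finset.univ.filter fun t => t ≤ k ∧ g t = g k) := by
      intro x hx
      simp only [Finset.mem_filter] at *
      exact ⟨hx.1, le_trans hx.2.1 hjk, (h2 x).mp hx.2.2⟩
    exact Finset.card_le_card hsub

lemma aux_pos_le_iff {j k : Fin n} : pos g j ≤ pos g k ↔ g j < g k ∨ (g j = g k ∧ j ≤ k) := by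
  rcases lt_trichotomy (g j) (g k) with h | h | h
  · simp [le_of_lt (aux_pos_lt_of_lt h), h]
  · rw [aux_pos_le_iff_of_eq h]
    simp [h, lt_irrefl]
  · have := aux_pos_lt_of_lt h
    constructor
    · intro hle; omega
    · rintro (h' | ⟨h', _⟩)
      · exact absurd h' (not_lt.mpr (le_of_lt h))
      · exact absurd h' (ne_of_gt h)

lemma aux_pos_inj : Function.Injective (pos g) := by
  intro x y hxy
  have h1 := aux_pos_le_iff (g := g) (j := x) (k := y) |>.mp (le_of_eq hxy)
  have h2 := aux_pos_le_iff (g := g) (j := y) (k := x) |>.mp (le_of_eq hxy.symm)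
  rcases h1 with h | ⟨he, hle⟩
  · rcases h2 with h' | ⟨he', _⟩
    · exact absurd h' (not_lt.mpr (le_of_lt h))
    · exact absurd he'.symm (ne_of_lt h)
  · rcases h2 with h' | ⟨_, hle'⟩
    · exact absurd he (ne_of_gt h')
    · exact le_antisymm hle hle'

section DIGIT
variable {b x x' y y' : ℕ}

lemma aux_digit_lt (hy : y < b) (hy' : y' < b) :
    b * x + y < b * x' + y' ↔ x < x' ∨ (x = x' ∧ y < y') := by
  constructor
  · intro H
    rcases lt_trichotomy x x' with h | h | h
    · exact Or.inl h
    · subst h; exact Or.inr ⟨rfl, by omega⟩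
    · exfalso
      have h1 : b * (x' + 1) ≤ b * x := Nat.mul_le_mul_left b h
      have h2 : b * x' + y' < b * (x' + 1) := by rw [Nat.mul_succ]; omega
      omega
  · rintro (h | ⟨rfl, h⟩)
    · have h1 : b * (x + 1) ≤ b * x' := Nat.mul_le_mul_left b h
      have h2 : b * x + y < b * (x + 1) := by rw [Nat.mul_succ]; omega
      omega
    · omega

lemma aux_digit_eq (hy : y < b) (hy' : y' < b) :
    b * x + y = b * x' + y' ↔ x = x' ∧ y = y' := by
  constructor
  · intro H
    rcases lt_trichotomy x x' with h | h | h
    · have := (aux_digit_lt hy hy').mpr (Or.inl h); omega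
    · subst h; exact ⟨rfl, by omega⟩
    · have := (aux_digit_lt hy' hy).mpr (Or.inl h); omega
  · rintro ⟨rfl, rfl⟩; rfl
end DIGIT

def pgFun {n b : ℕ} (g : Fin n → Fin b) (k : Fin n) : Fin n :=
  ⟨pos g k - 1, by have h1 := aux_pos_pos g k; have h2 := aux_pos_le g k; omega⟩

lemma pgFun_val {n b : ℕ} (g : Fin n → Fin b) (k : Fin n) :
    (pgFun g k : ℕ) + 1 = pos g k := by
  have := aux_pos_pos g k
  simp only [pgFun]
  omega

lemma pgFun_inj {n b : ℕ} (g : Fin n → Fin b) : Function.Injective (pgFun g) := by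
  intro x y hxy
  apply aux_pos_inj (g := g)
  have := congrArg Fin.val hxy
  simp only [pgFun] at this
  have h1 := aux_pos_pos g x
  have h2 := aux_pos_pos g y
  omega

lemma pgFun_bij {n b : ℕ} (g : Fin n → Fin b) : Function.Bijective (pgFun g) :=
  Finite.injective_iff_bijective.mp (pgFun_inj g)

lemma card_filter_comp_bij {α : Type*} [Fintype α] (e : α → α) (he : Function.Bijective e)
    (p : α → Prop) [DecidablePred p] :
    (Finset.univ.filter fun x => p (e x)).card = (Finset.univ.filter p).card := by
  apply Finset.card_bij (fun x _ => e x)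
  · intro x hx
    simp only [Finset.mem_filter, Finset.mem_univ, true_and] at *
    exact hx
  · intro x _ y _ hxy
    exact he.1 hxy
  · intro t ht
    simp only [Finset.mem_filter, Finset.mem_univ, true_and] at ht
    obtain ⟨x, hx⟩ := he.2 t
    exact ⟨x, by simp [Finset.mem_filter, hx, ht], hx⟩

lemma aux_pos_comp {n a b : ℕ} (f : Fin n → Fin a) (g : Fin n → Fin b)
    (h : Fin n → Fin (a * b)) (hh : ∀ k, (h k : ℕ) = b * (f (pgFun g k)) + (g k)) (k : Fin n) :
    pos h k = pos f (pgFun g k) := by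
  set i := pgFun g k with hi
  have hlt : ∀ j, h j < h k ↔ (f (pgFun g j) < f i ∨ (f (pgFun g j) = f i ∧ g j < g k)) := by
    intro j
    rw [Fin.lt_def, hh j, hh k, aux_digit_lt (g j).isLt (g k).isLt]
    simp only [Fin.lt_def, Fin.ext_iff, hi]
  have heq : ∀ j, h j = h k ↔ (f (pgFun g j) = f i ∧ g j = g k) := by
    intro j
    rw [Fin.ext_iff, hh j, hh k, aux_digit_eq (g j).isLt (g k).isLt]
    simp only [Fin.ext_iff, hi]
  have e1 : (Finset.univ.filter fun j => h j < h k).card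
      = (Finset.univ.filter fun j => f (pgFun g j) < f i).card
      + (Finset.univ.filter fun j => f (pgFun g j) = f i ∧ g j < g k).card := by
    rw [Finset.filter_congr (fun j _ => by rw [hlt j] : ∀ j ∈ Finset.univ, _)]
    rw [Finset.filter_or, Finset.card_union_of_disjoint]
    rw [Finset.disjoint_left]
    intro x hx hx'
    simp only [Finset.mem_filter] at hx hx'
    exact absurd (hx'.2.1 ▸ hx.2) (lt_irrefl _)
  have e2 : (Finset.univ.filter fun j => j ≤ k ∧ h j = h k).card
      = (Finset.univ.filter fun j => j ≤ k ∧ (f (pgFun g j) = f i ∧ g j = g k)).card := by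
    congr 1
    apply Finset.filter_congr
    intro j _
    rw [heq j]
  have split : ∀ j : Fin n, (f (pgFun g j) = f i ∧ pgFun g j ≤ i) ↔
      ((f (pgFun g j) = f i ∧ g j < g k) ∨ (j ≤ k ∧ (f (pgFun g j) = f i ∧ g j = g k))) := by
    intro j
    have hle : pos g j ≤ pos g k ↔ g j < g k ∨ (g j = g k ∧ j ≤ k) := aux_pos_le_iff
    have pgle : pgFun g j ≤ i ↔ pos g j ≤ pos g k := by
      rw [hi]
      have v1 := pgFun_val g j
      have v2 := pgFun_val g k
      rw [Fin.le_def]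
      omega
    rw [pgle, hle]
    tauto
  have e3 : (Finset.univ.filter fun j => f (pgFun g j) = f i ∧ pgFun g j ≤ i).card
      = (Finset.univ.filter fun j => f (pgFun g j) = f i ∧ g j < g k).card
      + (Finset.univ.filter fun j => j ≤ k ∧ (f (pgFun g j) = f i ∧ g j = g k)).card := by
    rw [Finset.filter_congr (fun j _ => by rw [split j] : ∀ j ∈ Finset.univ, _)]
    rw [Finset.filter_or, Finset.card_union_of_disjoint]
    rw [Finset.disjoint_left]
    intro x hx hx'
    simp only [Finset.mem_filter] at hx hx'
    exact absurd (hx'.2.2.2 ▸ hx.2.2) (lt_irrefl _)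
  have e4 : (Finset.univ.filter fun j => f (pgFun g j) < f i).card
      = (Finset.univ.filter fun t => f t < f i).card :=
    card_filter_comp_bij (pgFun g) (pgFun_bij g) (fun t => f t < f i)
  have e5 : (Finset.univ.filter fun j => f (pgFun g j) = f i ∧ pgFun g j ≤ i).card
      = (Finset.univ.filter fun t => t ≤ i ∧ f t = f i).card := by
    rw [show (Finset.univ.filter fun t : Fin n => t ≤ i ∧ f t = f i)
        = (Finset.univ.filter fun t : Fin n => f t = f i ∧ t ≤ i) by
      apply Finset.filter_congr; intro t _; exact and_comm]
    exact card_filter_comp_bij (pgFun g) (pgFun_bij g) (fun t => f t = f i ∧ t ≤ i)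
  unfold pos
  omega

lemma aux_bound {a b : ℕ} (x : Fin a) (y : Fin b) : b * (x : ℕ) + (y : ℕ) < a * b := by
  have h1 : b * ((x : ℕ) + 1) ≤ b * a := Nat.mul_le_mul_left b x.isLt
  rw [Nat.mul_succ] at h1
  have := y.isLt
  have hc : a * b = b * a := Nat.mul_comm a b
  omega

lemma aux_count (a b n : ℕ) (ha : 1 ≤ a) (hb : 1 ≤ b) (i j : Fin n) :
    ∑ t : Fin n, ((Finset.univ.filter fun f : Fin n → Fin a => pos f t = (i : ℕ) + 1).card
      * (Finset.univ.filter fun g : Fin n → Fin b => pos g j = (t : ℕ) + 1).card)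
    = (Finset.univ.filter fun h : Fin n → Fin (a * b) => pos h j = (i : ℕ) + 1).card := by
  classical
  set S : Finset ((Fin n → Fin a) × (Fin n → Fin b)) :=
    Finset.univ.filter fun p => pos p.1 (pgFun p.2 j) = (i : ℕ) + 1 with hS
  -- Step A : S.card = LHS
  have stepA : S.card = ∑ t : Fin n,
      ((Finset.univ.filter fun f : Fin n → Fin a => pos f t = (i : ℕ) + 1).card
      * (Finset.univ.filter fun g : Fin n → Fin b => pos g j = (t : ℕ) + 1).card) := by
    rw [Finset.card_eq_sum_card_fiberwise
      (f := fun p : (Fin n → Fin a) × (Fin n → Fin b) => pgFun p.2 j) (t := Finset.univ)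
      (fun p _ => Finset.mem_univ _)]
    apply Finset.sum_congr rfl
    intro t _
    rw [show S.filter (fun p => pgFun p.2 j = t)
        = (Finset.univ.filter fun f : Fin n → Fin a => pos f t = (i : ℕ) + 1) ×ˢ
          (Finset.univ.filter fun g : Fin n → Fin b => pos g j = (t : ℕ) + 1) from ?_]
    · exact Finset.card_product _ _
    ext p
    simp only [hS, Finset.mem_filter, Finset.mem_product, Finset.mem_univ, true_and,
      Finset.filter_filter]
    constructor
    · rintro ⟨h1, rfl⟩
      refine ⟨h1, ?_⟩
      have := pgFun_val p.2 j
      omega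
    · rintro ⟨h1, h2⟩
      have hv := pgFun_val p.2 j
      have ht : pgFun p.2 j = t := by
        apply Fin.ext
        omega
      exact ⟨ht ▸ h1, ht⟩
  rw [← stepA]
  -- Step B : S.card = RHS via bijection
  apply Finset.card_bij
    (fun p _ => fun k => (⟨b * (p.1 (pgFun p.2 k) : ℕ) + (p.2 k : ℕ), aux_bound _ _⟩ : Fin (a * b)))
  · intro p hp
    simp only [hS, Finset.mem_filter, Finset.mem_univ, true_and] at hp ⊢
    rw [aux_pos_comp p.1 p.2 _ (fun k => rfl) j]
    exact hp
  · intro p _ q _ hpq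
    have hval : ∀ k : Fin n, b * (p.1 (pgFun p.2 k) : ℕ) + (p.2 k : ℕ)
        = b * (q.1 (pgFun q.2 k) : ℕ) + (q.2 k : ℕ) := by
      intro k
      exact congrArg Fin.val (congrFun hpq k)
    have h2 : p.2 = q.2 := by
      funext k
      apply Fin.ext
      exact ((aux_digit_eq (p.2 k).isLt (q.2 k).isLt).mp (hval k)).2
    have h1 : p.1 = q.1 := by
      funext t
      obtain ⟨k, hk⟩ := (pgFun_bij p.2).2 t
      have := ((aux_digit_eq (p.2 k).isLt (q.2 k).isLt).mp (hval k)).1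
      rw [← hk]
      apply Fin.ext
      rw [h2] at this ⊢
      exact this
    exact Prod.ext h1 h2
  · intro h hmem
    simp only [Finset.mem_filter, Finset.mem_univ, true_and] at hmem
    have hb0 : 0 < b := hb
    have ha0 : 0 < a := ha
    set g : Fin n → Fin b := fun k => ⟨(h k : ℕ) % b, Nat.mod_lt _ hb0⟩ with hg
    set e : Fin n ≃ Fin n := Equiv.ofBijective (pgFun g) (pgFun_bij g) with he
    set f : Fin n → Fin a := fun t => ⟨(h (e.symm t) : ℕ) / b, by
      rw [Nat.div_lt_iff_lt_mul hb0]
      exact (h (e.symm t)).isLt⟩ with hf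
    have hval : ∀ k : Fin n, (h k : ℕ) = b * (f (pgFun g k) : ℕ) + (g k : ℕ) := by
      intro k
      have hek : e.symm (pgFun g k) = k := by
        rw [show pgFun g k = e k from rfl, Equiv.symm_apply_apply]
      simp only [hf, hg, hek]
      have hek' := hek
      simp only [hg] at hek'
      rw [hek']
      exact (Nat.div_add_mod (h k : ℕ) b).symm
    refine ⟨(f, g), ?_, ?_⟩
    · simp only [hS, Finset.mem_filter, Finset.mem_univ, true_and]
      rw [← aux_pos_comp f g h hval j]
      exact hmem
    · funext k
      apply Fin.ext
      exact (hval k).symm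

/-- The single-card transition matrices satisfy `P_a · P_b = P_{ab}`. -/
theorem statement2 (a b n : ℕ) (ha : 1 ≤ a) (hb : 1 ≤ b) (hn : 1 ≤ n) (i j : Fin n) :
    ∑ t : Fin n, Pmat a i t * Pmat b t j = Pmat (a * b) i j := by
  have hcount := aux_count a b n ha hb i j
  simp only [Pmat, div_mul_div_comm, ← Finset.sum_div]
  rw [Nat.cast_mul, mul_pow, ← hcount]
  push_cast
  ring
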